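/- A short exact sequence 0 → X → Y → Z → 0 of left R-modules is pure exact (i.e. remains exact after tensoring with any right R-module) if and only if the induced sequence of character modules 0 → Z^+ → Y^+ → X^+ → 0, where M^+ = Hom_ℤ(M, ℚ/ℤ), is a split exact sequence of right R-modules. -/

import Mathlib

open TensorProduct

universe u

section BalancedTensor

variable (R : Type u) [Ring R]
variable (M : Type u) [AddCommGroup M] [Module Rᵐᵒᵖ M]
variable (N : Type u) [AddCommGroup N] [Module R N]

/-- The subgroup of relations defining the balanced tensor product `M ⊗_R N` of a right
`R`-module `M` (i.e. a left `Rᵐᵒᵖ`-module) and a left `R`-module `N`. -/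
def tensorRel : Submodule ℤ (M ⊗[ℤ] N) :=
  Submodule.span ℤ {x | ∃ (m : M) (r : R) (n : N),
    x = (MulOpposite.op r • m) ⊗ₜ[ℤ] n - m ⊗ₜ[ℤ] (r • n)}

/-- The balanced tensor product `M ⊗_R N` over a (possibly noncommutative) ring `R`. -/
abbrev BTensor := (M ⊗[ℤ] N) ⧸ tensorRel R M N

variable {R N}
variable {N' : Type u} [AddCommGroup N'] [Module R N']

/-- The map `M ⊗_R N → M ⊗_R N'` induced by a map of left `R`-modules `f : N → N'`. -/
noncomputable def btmap (f : N →ₗ[R] N') : BTensor R M N →ₗ[ℤ] BTensor R M N' :=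
  Submodule.mapQ _ _ (LinearMap.lTensor M f.toAddMonoidHom.toIntLinearMap) (by
    refine Submodule.span_le.mpr ?_
    rintro x ⟨m, r, n, rfl⟩
    show LinearMap.lTensor M f.toAddMonoidHom.toIntLinearMap
      ((MulOpposite.op r • m) ⊗ₜ[ℤ] n - m ⊗ₜ[ℤ] (r • n)) ∈ tensorRel R M N'
    simp only [map_sub, LinearMap.lTensor_tmul]
    refine Submodule.subset_span ⟨m, r, f n, ?_⟩
    simp [map_smul])

end BalancedTensor

/-- A short exact sequence `0 → A → B → C → 0` of left `R`-modules (given by the maps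
`f : A → B` and `g : B → C`) is pure if it remains exact after applying `W ⊗_R -` for
every right `R`-module `W`. -/
def TensorPure (R : Type u) [Ring R] {A B C : Type u} [AddCommGroup A] [Module R A]
    [AddCommGroup B] [Module R B] [AddCommGroup C] [Module R C]
    (f : A →ₗ[R] B) (g : B →ₗ[R] C) : Prop :=
  ∀ (W : Type u) [AddCommGroup W] [Module Rᵐᵒᵖ W],
    Function.Injective (btmap W f) ∧ Function.Exact (btmap W f) (btmap W g) ∧
      Function.Surjective (btmap W g)

section CharacterMod

variable (R : Type u) [Ring R]
variable (A : Type u) [AddCommGroup A] [Module R A]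

/-- The character module `A⁺ = Hom_ℤ(A, ℚ/ℤ)` of a left `R`-module `A` is a right
`R`-module, i.e. a left `Rᵐᵒᵖ`-module, via `(c • r) (a) = c (r • a)`. -/
noncomputable instance charModule : Module Rᵐᵒᵖ (CharacterModule A) where
  smul r c := c.comp (DistribMulAction.toAddMonoidHom A r.unop)
  one_smul c := by ext m; show c ((1 : Rᵐᵒᵖ).unop • m) = c m; simp
  mul_smul r s c := by
    ext m
    show c ((r * s).unop • m) = c (s.unop • r.unop • m)
    rw [MulOpposite.unop_mul, mul_smul]
  smul_zero r := rfl
  smul_add r c c' := rfl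
  add_smul r s c := by
    ext m
    show c ((r + s).unop • m) = c (r.unop • m) + c (s.unop • m)
    rw [MulOpposite.unop_add, add_smul, map_add]
  zero_smul c := by ext m; show c ((0 : Rᵐᵒᵖ).unop • m) = 0; simp

variable {R A}
variable {B : Type u} [AddCommGroup B] [Module R B]

/-- The dual (character) map `B⁺ → A⁺` of `f : A → B`, a map of right `R`-modules. -/
noncomputable def charDual (f : A →ₗ[R] B) :
    CharacterModule B →ₗ[Rᵐᵒᵖ] CharacterModule A where
  toFun c := c.comp f.toAddMonoidHom
  map_add' c c' := rfl
  map_smul' r c := by ext a; exact congrArg c (f.map_smul r.unop a).symm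

end CharacterMod


open CharacterModule

section Dual
variable {M N P : Type u} [AddCommGroup M] [AddCommGroup N] [AddCommGroup P]
variable (u : M →ₗ[ℤ] N) (v : N →ₗ[ℤ] P)

lemma dual_injective_iff_surjective :
    Function.Injective (CharacterModule.dual v) ↔ Function.Surjective v := by
  constructor
  · intro h
    intro p
    by_contra hp
    have hp : ∀ n, v n ≠ p := fun n hn => hp ⟨n, hn⟩
    have hne : (Submodule.Quotient.mk p : P ⧸ LinearMap.range v) ≠ 0 := by
      rw [Ne, Submodule.Quotient.mk_eq_zero]
      intro hmem
      obtain ⟨n, hn⟩ := hmem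
      exact hp n hn
    obtain ⟨c, hc⟩ := exists_character_apply_ne_zero_of_ne_zero hne
    have hz : CharacterModule.dual v (c.comp (Submodule.mkQ _).toAddMonoidHom) = 0 := by
      ext n
      show c (Submodule.Quotient.mk (v n)) = 0
      have : (Submodule.Quotient.mk (v n) : P ⧸ LinearMap.range v) = 0 := by
        rw [Submodule.Quotient.mk_eq_zero]; exact ⟨n, rfl⟩
      rw [this, map_zero]
    have := h (hz.trans (map_zero (CharacterModule.dual v)).symm)
    exact hc (DFunLike.congr_fun this p)
  · intro hsurj c c' h
    ext p
    obtain ⟨n, rfl⟩ := hsurj p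
    exact DFunLike.congr_fun h n

lemma exact_dual_of_exact (h : Function.Exact u v) (hv : Function.Surjective v) :
    Function.Exact (CharacterModule.dual v) (CharacterModule.dual u) := by
  intro c
  constructor
  · intro hc
    have hker : LinearMap.ker v ≤ LinearMap.ker (c.toIntLinearMap) := by
      intro n hn
      obtain ⟨m, rfl⟩ := (h n).mp hn
      exact DFunLike.congr_fun hc m
    let e : (N ⧸ LinearMap.ker v) ≃ₗ[ℤ] P := v.quotKerEquivOfSurjective hv
    refine ⟨((Submodule.liftQ _ c.toIntLinearMap hker) ∘ₗ e.symm.toLinearMap).toAddMonoidHom, ?_⟩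
    ext n
    show (Submodule.liftQ _ c.toIntLinearMap hker) (e.symm (v n)) = c n
    have : e.symm (v n) = Submodule.Quotient.mk n := by
      rw [LinearEquiv.symm_apply_eq]
      rfl
    rw [this]
    rfl
  · rintro ⟨d, rfl⟩
    ext m
    show d (v (u m)) = 0
    rw [h.apply_apply_eq_zero, map_zero]

lemma exact_of_exact_dual
    (h : Function.Exact (CharacterModule.dual v) (CharacterModule.dual u)) :
    Function.Exact u v := by
  intro n
  constructor
  · intro hn
    by_contra hnr
    have hne : (Submodule.Quotient.mk n : N ⧸ LinearMap.range u) ≠ 0 := by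
      rw [Ne, Submodule.Quotient.mk_eq_zero]
      exact hnr
    obtain ⟨c, hc⟩ := exists_character_apply_ne_zero_of_ne_zero hne
    have hz : CharacterModule.dual u (c.comp (Submodule.mkQ _).toAddMonoidHom) = 0 := by
      ext m
      show c (Submodule.Quotient.mk (u m)) = 0
      have : (Submodule.Quotient.mk (u m) : N ⧸ LinearMap.range u) = 0 := by
        rw [Submodule.Quotient.mk_eq_zero]; exact ⟨m, rfl⟩
      rw [this, map_zero]
    obtain ⟨d, hd⟩ := (h _).mp hz
    have : c (Submodule.Quotient.mk n) = d (v n) := (DFunLike.congr_fun hd n).symm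
    rw [hn, map_zero] at this
    exact hc this
  · rintro ⟨m, rfl⟩
    refine eq_zero_of_character_apply fun c => ?_
    exact DFunLike.congr_fun (h.apply_apply_eq_zero c) m

end Dual

section Adjunction

variable (R : Type u) [Ring R]
variable (W : Type u) [AddCommGroup W] [Module Rᵐᵒᵖ W]
variable {N : Type u} [AddCommGroup N] [Module R N]

/-- The adjunction map `(W ⊗_R N)⁺ → Hom_{Rᵒᵖ}(W, N⁺)`. -/
noncomputable def Phi (c : CharacterModule (BTensor R W N)) : W →ₗ[Rᵐᵒᵖ] CharacterModule N where
  toFun w := c.comp ((Submodule.mkQ (tensorRel R W N)) ∘ₗ (TensorProduct.mk ℤ W N w)).toAddMonoidHom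
  map_add' w w' := by
    ext n
    show c (Submodule.Quotient.mk ((w + w') ⊗ₜ[ℤ] n)) = _ + _
    rw [TensorProduct.add_tmul, Submodule.Quotient.mk_add, map_add]
    rfl
  map_smul' r w := by
    ext n
    show c (Submodule.Quotient.mk ((r • w) ⊗ₜ[ℤ] n)) = c (Submodule.Quotient.mk (w ⊗ₜ[ℤ] (r.unop • n)))
    congr 1
    rw [Submodule.Quotient.eq]
    exact Submodule.subset_span ⟨w, r.unop, n, by rw [MulOpposite.op_unop]⟩

/-- The inverse adjunction map `Hom_{Rᵒᵖ}(W, N⁺) → (W ⊗_R N)⁺`. -/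
noncomputable def Psi (ψ : W →ₗ[Rᵐᵒᵖ] CharacterModule N) : CharacterModule (BTensor R W N) :=
  (Submodule.liftQ (tensorRel R W N)
    (TensorProduct.lift (AddMonoidHom.toIntLinearMap
      { toFun := fun w => (ψ w).toIntLinearMap
        map_zero' := by ext n; simp; rfl
        map_add' := fun w w' => by
          ext n
          show (ψ (w + w')) n = (ψ w) n + (ψ w') n
          rw [map_add]; rfl }))
    (by
      rw [tensorRel, Submodule.span_le]
      rintro x ⟨w, r, n, rfl⟩
      simp only [SetLike.mem_coe, LinearMap.mem_ker, map_sub, TensorProduct.lift.tmul]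
      refine LinearMap.mem_ker.mpr ?_
      refine (map_sub _ _ _).trans ?_
      show (ψ (MulOpposite.op r • w)).toIntLinearMap n - (ψ w).toIntLinearMap (r • n) = 0
      rw [ψ.map_smul]
      show (ψ w) ((MulOpposite.op r).unop • n) - (ψ w) (r • n) = 0
      rw [MulOpposite.unop_op, sub_self])).toAddMonoidHom

lemma Phi_Psi (ψ : W →ₗ[Rᵐᵒᵖ] CharacterModule N) : Phi R W (Psi R W ψ) = ψ := by
  ext w n
  show (Psi R W ψ) (Submodule.Quotient.mk (w ⊗ₜ[ℤ] n)) = ψ w n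
  rfl

lemma Phi_injective : Function.Injective (Phi R W (N := N)) := by
  intro c c' h
  ext x
  obtain ⟨t, rfl⟩ := Submodule.Quotient.mk_surjective _ x
  induction t with
  | zero => rw [Submodule.Quotient.mk_zero, map_zero, map_zero]
  | tmul w n => exact DFunLike.congr_fun (LinearMap.congr_fun h w) n
  | add a b ha hb => rw [Submodule.Quotient.mk_add, map_add, map_add, ha, hb]

lemma Phi_zero : Phi R W (N := N) 0 = 0 := by ext w n; rfl

/-- The adjunction as an equivalence. -/
noncomputable def PhiEquiv : CharacterModule (BTensor R W N) ≃ (W →ₗ[Rᵐᵒᵖ] CharacterModule N) :=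
  Equiv.ofBijective (Phi R W) ⟨Phi_injective R W, fun ψ => ⟨Psi R W ψ, Phi_Psi R W ψ⟩⟩

variable {N' : Type u} [AddCommGroup N'] [Module R N']

lemma Phi_natural (h : N →ₗ[R] N') (c : CharacterModule (BTensor R W N')) :
    Phi R W (CharacterModule.dual (btmap W h) c) = (charDual h) ∘ₗ (Phi R W c) := by
  ext w n
  show c ((btmap W h) (Submodule.Quotient.mk (w ⊗ₜ[ℤ] n))) = c (Submodule.Quotient.mk (w ⊗ₜ[ℤ] h n))
  congr 1

end Adjunction
section Transfer

variable {A B C A' B' C' : Type*} [Zero C] [Zero C']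
variable (eA : A ≃ A') (eB : B ≃ B') (eC : C ≃ C')
variable {p : A → B} {q : B → C} {p' : A' → B'} {q' : B' → C'}

lemma inj_iff_of_comm (hp : ∀ a, eB (p a) = p' (eA a)) :
    Function.Injective p ↔ Function.Injective p' := by
  constructor
  · intro h a1' a2' he
    have h1 : eB (p (eA.symm a1')) = eB (p (eA.symm a2')) := by
      rw [hp, hp, eA.apply_symm_apply, eA.apply_symm_apply]; exact he
    have h2 := h (eB.injective h1)
    have := congrArg eA h2
    rwa [eA.apply_symm_apply, eA.apply_symm_apply] at this
  · intro h a1 a2 he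
    apply eA.injective
    apply h
    rw [← hp, ← hp, he]

lemma surj_iff_of_comm (hp : ∀ a, eB (p a) = p' (eA a)) :
    Function.Surjective p ↔ Function.Surjective p' := by
  constructor
  · intro h b'
    obtain ⟨a, ha⟩ := h (eB.symm b')
    exact ⟨eA a, by rw [← hp, ha, eB.apply_symm_apply]⟩
  · intro h b
    obtain ⟨a', ha⟩ := h (eB b)
    refine ⟨eA.symm a', eB.injective ?_⟩
    rw [hp, eA.apply_symm_apply, ha]

lemma exact_iff_of_comm (hp : ∀ a, eB (p a) = p' (eA a)) (hq : ∀ b, eC (q b) = q' (eB b))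
    (h0 : eC 0 = 0) : Function.Exact p q ↔ Function.Exact p' q' := by
  constructor
  · intro h b'
    constructor
    · intro hq0
      have hz : q (eB.symm b') = 0 := by
        apply eC.injective
        rw [hq, eB.apply_symm_apply, hq0, h0]
      obtain ⟨a, ha⟩ := (h _).mp hz
      exact ⟨eA a, by rw [← hp, ha, eB.apply_symm_apply]⟩
    · rintro ⟨a', rfl⟩
      have h2 : q (p (eA.symm a')) = 0 := (h _).mpr ⟨_, rfl⟩
      have h3 : q' (eB (p (eA.symm a'))) = 0 := by rw [← hq, h2, h0]
      rwa [hp, eA.apply_symm_apply] at h3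
  · intro h b
    constructor
    · intro hq0
      have hz : q' (eB b) = 0 := by rw [← hq, hq0, h0]
      obtain ⟨a', ha⟩ := (h _).mp hz
      refine ⟨eA.symm a', eB.injective ?_⟩
      rw [hp, eA.apply_symm_apply, ha]
    · rintro ⟨a, rfl⟩
      have h2 : q' (eB (p a)) = 0 := (h _).mpr ⟨eA a, (hp a).symm⟩
      apply eC.injective
      rw [hq, h2, h0]

end Transfer
theorem pure_iff_characterSequence_split
    (R : Type u) [Ring R] (X Y Z : Type u)
    [AddCommGroup X] [Module R X] [AddCommGroup Y] [Module R Y] [AddCommGroup Z] [Module R Z]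
    (f : X →ₗ[R] Y) (g : Y →ₗ[R] Z)
    (hf : Function.Injective f) (hg : Function.Surjective g) (hfg : Function.Exact f g) :
    TensorPure R f g ↔
      (Function.Injective (charDual g) ∧ Function.Exact (charDual g) (charDual f) ∧
        Function.Surjective (charDual f) ∧
        ∃ s : CharacterModule X →ₗ[Rᵐᵒᵖ] CharacterModule Y,
          (charDual f) ∘ₗ s = LinearMap.id) := by
  constructor
  · intro hpure
    refine ⟨?_, ?_, ?_, ?_⟩
    · -- injectivity of charDual g
      exact (dual_injective_iff_surjective g.toAddMonoidHom.toIntLinearMap).mpr hg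
    · -- exactness of the character sequence
      exact exact_dual_of_exact f.toAddMonoidHom.toIntLinearMap g.toAddMonoidHom.toIntLinearMap
        hfg hg
    · -- surjectivity of charDual f
      exact CharacterModule.dual_surjective_of_injective f.toAddMonoidHom.toIntLinearMap hf
    · -- the splitting, obtained from purity at W = X⁺
      have h1 : Function.Injective (btmap (CharacterModule X) f) := (hpure _).1
      have h2 : Function.Surjective (CharacterModule.dual (btmap (CharacterModule X) f)) :=
        CharacterModule.dual_surjective_of_injective _ h1
      have h3 : Function.Surjective
          (fun ψ : CharacterModule X →ₗ[Rᵐᵒᵖ] CharacterModule Y => (charDual f) ∘ₗ ψ) :=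
        (surj_iff_of_comm (PhiEquiv R (CharacterModule X) (N := Y))
          (PhiEquiv R (CharacterModule X) (N := X))
          (fun c => Phi_natural R (CharacterModule X) f c)).mp h2
      obtain ⟨s, hs⟩ := h3 LinearMap.id
      exact ⟨s, hs⟩
  · rintro ⟨hinj, hexact, hsurj, s, hs⟩
    intro W _ _
    have hs' : ∀ x, charDual f (s x) = x := fun x => LinearMap.congr_fun hs x
    -- construct a retraction `r` of `charDual g`
    let e := LinearEquiv.ofInjective (charDual g) hinj
    let p : CharacterModule Y →ₗ[Rᵐᵒᵖ] CharacterModule Y := LinearMap.id - s ∘ₗ charDual f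
    have hpval : ∀ y, p y = y - s (charDual f y) := fun y => rfl
    have hmem : ∀ y, p y ∈ LinearMap.range (charDual g) := by
      intro y
      rw [LinearMap.mem_range]
      have hz : charDual f (p y) = 0 := by
        rw [hpval, map_sub, hs' (charDual f y), sub_self]
      exact (hexact (p y)).mp hz
    let r : CharacterModule Y →ₗ[Rᵐᵒᵖ] CharacterModule Z :=
      e.symm.toLinearMap ∘ₗ LinearMap.codRestrict _ p hmem
    have hr : ∀ y, charDual g (r y) = y - s (charDual f y) := by
      intro y
      have h1 : ((e (e.symm ⟨p y, hmem y⟩)) : CharacterModule Y) = p y := by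
        rw [e.apply_symm_apply]
      have h2 : ((e (e.symm ⟨p y, hmem y⟩)) : CharacterModule Y)
          = charDual g (e.symm ⟨p y, hmem y⟩) := rfl
      rw [h2] at h1
      exact h1.trans (hpval y)
    refine ⟨?_, ?_, ?_⟩
    · -- injectivity of btmap W f
      have hCF : Function.Surjective
          (fun ψ : W →ₗ[Rᵐᵒᵖ] CharacterModule Y => (charDual f) ∘ₗ ψ) := by
        intro φ
        refine ⟨s ∘ₗ φ, ?_⟩
        show charDual f ∘ₗ (s ∘ₗ φ) = φ
        rw [← LinearMap.comp_assoc, hs, LinearMap.id_comp]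
      have hDF : Function.Surjective (CharacterModule.dual (btmap W f)) :=
        (surj_iff_of_comm (PhiEquiv R W (N := Y)) (PhiEquiv R W (N := X))
          (fun c => Phi_natural R W f c)).mpr hCF
      exact CharacterModule.dual_surjective_iff_injective.mp hDF
    · -- exactness of btmap W f, btmap W g
      have hCexact : Function.Exact
          (fun ψ : W →ₗ[Rᵐᵒᵖ] CharacterModule Z => (charDual g) ∘ₗ ψ)
          (fun φ : W →ₗ[Rᵐᵒᵖ] CharacterModule Y => (charDual f) ∘ₗ φ) := by
        intro φ
        constructor
        · intro h0
          refine ⟨r ∘ₗ φ, LinearMap.ext fun w => ?_⟩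
          show charDual g (r (φ w)) = φ w
          rw [hr]
          have : charDual f (φ w) = 0 := LinearMap.congr_fun h0 w
          rw [this, map_zero, sub_zero]
        · rintro ⟨ψ, rfl⟩
          refine LinearMap.ext fun w => ?_
          show charDual f (charDual g (ψ w)) = 0
          exact hexact.apply_apply_eq_zero (ψ w)
      have hDexact : Function.Exact (CharacterModule.dual (btmap W g))
          (CharacterModule.dual (btmap W f)) :=
        (exact_iff_of_comm (PhiEquiv R W (N := Z)) (PhiEquiv R W (N := Y))
          (PhiEquiv R W (N := X)) (fun c => Phi_natural R W g c)
          (fun c => Phi_natural R W f c) (Phi_zero R W)).mpr hCexact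
      exact exact_of_exact_dual (btmap W f) (btmap W g) hDexact
    · -- surjectivity of btmap W g
      have hCG : Function.Injective
          (fun ψ : W →ₗ[Rᵐᵒᵖ] CharacterModule Z => (charDual g) ∘ₗ ψ) := by
        intro ψ ψ' h
        exact LinearMap.ext fun w => hinj (LinearMap.congr_fun h w)
      have hDG : Function.Injective (CharacterModule.dual (btmap W g)) :=
        (inj_iff_of_comm (PhiEquiv R W (N := Z)) (PhiEquiv R W (N := Y))
          (fun c => Phi_natural R W g c)).mpr hCG
      exact (dual_injective_iff_surjective (btmap W g)).mp hDG
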